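/- The island-coalescence equilibrium satisfies the stationary induction equation with the stated forcing: for every (x,y) ∈ ℝ², (1/Re_m)·(∂y j(x,y), −∂x j(x,y)) = (−8π²·(k² − 1)/(Re_m·D(x,y)³))·(sinh(2πy), k·sin(2πx)), where j(x,y) = 2π·(k² − 1)/D(x,y)² is the scalar curl of B0; that is, (1/Re_m)·curl(curl B0) = g with g the forcing prescribed for the island coalescence problem. -/

import Mathlib

open Real

/-- Island coalescence: the equilibrium satisfies the stationary induction equation
`(1/Re_m)·curl(curl B0) = g`, i.e. with `j(x,y) = 2π(k² − 1)/D(x,y)²` the scalar curl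
of `B0` and `curl j = (∂y j, −∂x j)`,
`(1/Re_m)·(∂y j, −∂x j) = (−8π²(k²−1)/(Re_m·D³))·(sinh(2πy), k·sin(2πx))`. -/
theorem island_induction_with_forcing
    (k : ℝ) (hk0 : 0 < k) (hk1 : k < 1)
    (Rem : ℝ) (hRem : 0 < Rem)
    (D : ℝ → ℝ → ℝ) (j : ℝ → ℝ → ℝ)
    (hD : ∀ x y : ℝ, D x y = Real.cosh (2 * π * y) + k * Real.cos (2 * π * x))
    (hj : ∀ x y : ℝ, j x y = 2 * π * (k ^ 2 - 1) / (D x y) ^ 2) :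
    ∀ x y : ℝ,
      ((1 / Rem) * deriv (fun y' : ℝ => j x y') y
        = (-8 * π ^ 2 * (k ^ 2 - 1) / (Rem * (D x y) ^ 3)) * Real.sinh (2 * π * y)) ∧
      ((1 / Rem) * (-(deriv (fun x' : ℝ => j x' y) x))
        = (-8 * π ^ 2 * (k ^ 2 - 1) / (Rem * (D x y) ^ 3)) * (k * Real.sin (2 * π * x))) := by
  intro x y
  have hDpos : ∀ a b : ℝ, 0 < D a b := by
    intro a b
    rw [hD]
    have h1 : (1:ℝ) ≤ Real.cosh (2 * π * b) := Real.one_le_cosh _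
    have h2 : -k ≤ k * Real.cos (2 * π * a) := by
      nlinarith [Real.neg_one_le_cos (2 * π * a)]
    linarith
  have hDne : D x y ≠ 0 := (hDpos x y).ne'
  have hRne : Rem ≠ 0 := hRem.ne'
  constructor
  · -- y-derivative
    have hDy : HasDerivAt (fun y' : ℝ => D x y') (2 * π * Real.sinh (2 * π * y)) y := by
      have : HasDerivAt (fun y' : ℝ => Real.cosh (2 * π * y') + k * Real.cos (2 * π * x))
          (2 * π * Real.sinh (2 * π * y)) y := by
        have h := ((hasDerivAt_id y).const_mul (2 * π)).cosh
        simpa [mul_comm] using h.add_const (k * Real.cos (2 * π * x))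
      exact this.congr_of_eventuallyEq (by filter_upwards with z; rw [hD])
    have hj' : HasDerivAt (fun y' : ℝ => j x y')
        ((0 * (D x y) ^ 2 - (2 * π * (k ^ 2 - 1)) * (2 * D x y * (2 * π * Real.sinh (2 * π * y)))) / ((D x y) ^ 2) ^ 2) y := by
      have hsq : HasDerivAt (fun y' : ℝ => (D x y') ^ 2)
          (2 * D x y * (2 * π * Real.sinh (2 * π * y))) y := by
        simpa [pow_one] using hDy.fun_pow 2
      have := (hasDerivAt_const y (2 * π * (k ^ 2 - 1))).fun_div hsq (pow_ne_zero 2 hDne)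
      exact this.congr_of_eventuallyEq (by filter_upwards with z; rw [hj])
    rw [hj'.deriv]
    field_simp
    ring
  · -- x-derivative
    have hDx : HasDerivAt (fun x' : ℝ => D x' y) (k * (-Real.sin (2 * π * x) * (2 * π))) x := by
      have h2 : HasDerivAt (fun x' : ℝ => Real.cosh (2 * π * y) + k * Real.cos (2 * π * x'))
          (k * (-Real.sin (2 * π * x) * (2 * π))) x := by
        have h3 := (((hasDerivAt_id x).const_mul (2 * π)).cos.const_mul k).const_add (Real.cosh (2 * π * y))
        simpa [mul_comm] using h3
      exact h2.congr_of_eventuallyEq (by filter_upwards with z; rw [hD])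
    have hj' : HasDerivAt (fun x' : ℝ => j x' y)
        ((0 * (D x y) ^ 2 - (2 * π * (k ^ 2 - 1)) * (2 * D x y * (k * (-Real.sin (2 * π * x) * (2 * π))))) / ((D x y) ^ 2) ^ 2) x := by
      have hsq : HasDerivAt (fun x' : ℝ => (D x' y) ^ 2)
          (2 * D x y * (k * (-Real.sin (2 * π * x) * (2 * π)))) x := by
        simpa [pow_one] using hDx.fun_pow 2
      have := (hasDerivAt_const x (2 * π * (k ^ 2 - 1))).fun_div hsq (pow_ne_zero 2 hDne)
      exact this.congr_of_eventuallyEq (by filter_upwards with z; rw [hj])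
    rw [hj'.deriv]
    field_simp
    ring
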